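/- Let φ : A⁺ → S be a surjective semigroup homomorphism onto a finite semigroup S, let φ_bd : A⁺ → S_φ be the quotient map onto the Pin–Thérien expansion S_φ = A⁺/∼_φ, and let p_φ : S_φ → S be the unique homomorphism with φ = p_φ ∘ φ_bd. Then p_φ restricts to an isomorphism from the subsemigroup of S_φ generated by the regular elements of S_φ onto the subsemigroup of S generated by the regular elements of S. -/

import Mathlib

/- A surjective semigroup homomorphism `φ : A⁺ → S` is encoded by the monoid
homomorphism `ψ = φ^I : A^* → S^I = WithOne S` satisfying `ψ w ≠ 1` for `w ≠ 1`
and whose image contains `S`. -/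

/-- Green `R`-quasi-order on a monoid. -/
def RLe {M : Type*} [Monoid M] (s t : M) : Prop := ∃ x, s = t * x

/-- Strict Green `R`-order. -/
def RLt {M : Type*} [Monoid M] (s t : M) : Prop := RLe s t ∧ ¬ RLe t s

/-- Green `L`-quasi-order on a monoid. -/
def LLe {M : Type*} [Monoid M] (s t : M) : Prop := ∃ x, s = x * t

/-- Strict Green `L`-order. -/
def LLt {M : Type*} [Monoid M] (s t : M) : Prop := LLe s t ∧ ¬ LLe t s

/-- `(x₀, a, x₁)` is a good factorization with respect to `ψ = φ^I`. -/
def GoodFact {A S : Type*} [Semigroup S] (ψ : FreeMonoid A →* WithOne S)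
    (x₀ : FreeMonoid A) (a : A) (x₁ : FreeMonoid A) : Prop :=
  RLt (ψ (x₀ * FreeMonoid.of a)) (ψ x₀) ∧ LLt (ψ (FreeMonoid.of a * x₁)) (ψ x₁)

/-- `(x₀, a, x₁)` is a good factorization of the word `w`. -/
def GoodFactOf {A S : Type*} [Semigroup S] (ψ : FreeMonoid A →* WithOne S)
    (w x₀ : FreeMonoid A) (a : A) (x₁ : FreeMonoid A) : Prop :=
  w = x₀ * FreeMonoid.of a * x₁ ∧ GoodFact ψ x₀ a x₁

/-- The Pin–Thérien congruence `∼_φ` on words. -/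
def PTRel {A S : Type*} [Semigroup S] (ψ : FreeMonoid A →* WithOne S)
    (x y : FreeMonoid A) : Prop :=
  ψ x = ψ y ∧
    (∀ (x₀ : FreeMonoid A) (a : A) (x₁ : FreeMonoid A), GoodFactOf ψ x x₀ a x₁ →
      ∃ y₀ y₁ : FreeMonoid A, GoodFactOf ψ y y₀ a y₁ ∧ ψ x₀ = ψ y₀ ∧ ψ x₁ = ψ y₁) ∧
    (∀ (y₀ : FreeMonoid A) (a : A) (y₁ : FreeMonoid A), GoodFactOf ψ y y₀ a y₁ →
      ∃ x₀ x₁ : FreeMonoid A, GoodFactOf ψ x x₀ a x₁ ∧ ψ x₀ = ψ y₀ ∧ ψ x₁ = ψ y₁)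

/-- The word `u` represents a regular element of the Pin–Thérien expansion `S_φ`. -/
def RegularWord {A S : Type*} [Semigroup S] (ψ : FreeMonoid A →* WithOne S)
    (u : FreeMonoid A) : Prop :=
  u ≠ 1 ∧ ∃ x : FreeMonoid A, x ≠ 1 ∧ PTRel ψ (u * x * u) u

/-- The word `u` represents an element of the subsemigroup of `S_φ` generated by
its regular elements, i.e. its `∼_φ`-class is a product of regular classes. -/
def MultiregularWord {A S : Type*} [Semigroup S] (ψ : FreeMonoid A →* WithOne S)
    (u : FreeMonoid A) : Prop :=
  ∃ l : List (FreeMonoid A), l ≠ [] ∧ (∀ w ∈ l, RegularWord ψ w) ∧ PTRel ψ u l.prod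


section PTProofAux

variable {A S : Type*} [Semigroup S] {ψ : FreeMonoid A →* WithOne S}

theorem rle_trans' {M : Type*} [Monoid M] {x y z : M} (h1 : RLe x y) (h2 : RLe y z) :
    RLe x z := by
  obtain ⟨a, ha⟩ := h1; obtain ⟨b, hb⟩ := h2
  exact ⟨b * a, by rw [ha, hb, mul_assoc]⟩

theorem split_fact {A : Type*} {u v x₀ x₁ : FreeMonoid A} {a : A}
    (h : u * v = x₀ * FreeMonoid.of a * x₁) :
    (∃ m, u = x₀ * FreeMonoid.of a * m ∧ x₁ = m * v) ∨
    (∃ m, x₀ = u * m ∧ v = m * FreeMonoid.of a * x₁) := by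
  have h' : FreeMonoid.toList x₀ ++ ([a] ++ FreeMonoid.toList x₁) =
      FreeMonoid.toList u ++ FreeMonoid.toList v := by
    have h2 := congrArg FreeMonoid.toList h
    simp only [FreeMonoid.toList_mul, FreeMonoid.toList_of] at h2
    rw [h2, List.append_assoc]
  rcases List.append_eq_append_iff.mp h' with ⟨w, hw1, hw2⟩ | ⟨w, hw1, hw2⟩
  · cases w with
    | nil =>
      right
      refine ⟨1, ?_, ?_⟩
      · apply FreeMonoid.toList.injective
        simp only [FreeMonoid.toList_mul, FreeMonoid.toList_one, List.append_nil]
        simpa using hw1.symm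
      · apply FreeMonoid.toList.injective
        simp only [FreeMonoid.toList_mul, FreeMonoid.toList_one, FreeMonoid.toList_of,
          List.nil_append]
        simpa using hw2.symm
    | cons b t =>
      left
      have hab : a = b ∧ FreeMonoid.toList x₁ = t ++ FreeMonoid.toList v := by
        have h3 := hw2
        simp only [List.singleton_append, List.cons_append, List.cons.injEq] at h3
        exact h3
      refine ⟨FreeMonoid.ofList t, ?_, ?_⟩
      · apply FreeMonoid.toList.injective
        simp only [FreeMonoid.toList_mul, FreeMonoid.toList_of, FreeMonoid.toList_ofList]
        rw [hw1, ← hab.1]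
        simp
      · apply FreeMonoid.toList.injective
        simp only [FreeMonoid.toList_mul, FreeMonoid.toList_ofList]
        exact hab.2
  · right
    refine ⟨FreeMonoid.ofList w, ?_, ?_⟩
    · apply FreeMonoid.toList.injective
      simp only [FreeMonoid.toList_mul, FreeMonoid.toList_ofList]
      exact hw1
    · apply FreeMonoid.toList.injective
      simp only [FreeMonoid.toList_mul, FreeMonoid.toList_ofList, FreeMonoid.toList_of]
      rw [hw2, List.append_assoc]

/-- A word `w` is "killed" if no factorization of it, in any outer context, can
be good. -/
def Killed (ψ : FreeMonoid A →* WithOne S) (w : FreeMonoid A) : Prop :=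
  ∀ (Z Y : WithOne S) (y₀ : FreeMonoid A) (a : A) (y₁ : FreeMonoid A),
    w = y₀ * FreeMonoid.of a * y₁ →
    RLt (Z * ψ y₀ * ψ (FreeMonoid.of a)) (Z * ψ y₀) →
    LLt (ψ (FreeMonoid.of a) * (ψ y₁ * Y)) (ψ y₁ * Y) → False

theorem killed_one : Killed ψ 1 := by
  intro Z Y y₀ a y₁ heq _ _
  have := congrArg FreeMonoid.toList heq
  simp only [FreeMonoid.toList_one, FreeMonoid.toList_mul, FreeMonoid.toList_of] at this
  exact absurd this.symm (by simp)

theorem killed_mul {w₁ w₂ : FreeMonoid A} (h₁ : Killed ψ w₁) (h₂ : Killed ψ w₂) :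
    Killed ψ (w₁ * w₂) := by
  intro Z Y y₀ a y₁ heq hR hL
  rcases split_fact heq with ⟨m, hm1, hm2⟩ | ⟨m, hm1, hm2⟩
  · have e : ψ y₁ * Y = ψ m * (ψ w₂ * Y) := by rw [hm2, map_mul, mul_assoc]
    rw [e] at hL
    exact h₁ Z (ψ w₂ * Y) y₀ a m hm1 hR hL
  · have e : Z * ψ y₀ = Z * ψ w₁ * ψ m := by rw [hm1, map_mul, mul_assoc]
    rw [e] at hR
    exact h₂ (Z * ψ w₁) Y m a y₁ hm2 hR hL

theorem killed_sandwich {u x : FreeMonoid A} (h : ψ u * ψ x * ψ u = ψ u) :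
    Killed ψ (u * x * u) := by
  intro Z Y y₀ a y₁ heq hR hL
  set P := ψ u with hPdef
  set T := ψ x with hTdef
  set c := ψ (FreeMonoid.of a) with hcdef
  have hPTP : ∀ X : WithOne S, P * (T * (P * X)) = P * X := by
    intro X; rw [← mul_assoc, ← mul_assoc, h]
  rcases split_fact heq with ⟨m, hm1, hm2⟩ | ⟨m, hm1, hm2⟩
  · rcases split_fact hm1 with ⟨m', h1, h2⟩ | ⟨m', h1, h2⟩
    · -- zone 1 : u = y₀ * of a * m', m = m' * x, y₁ = m * u : L fails
      have hP : ∀ X : WithOne S, ψ y₀ * (c * (ψ m' * X)) = P * X := by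
        intro X
        rw [← mul_assoc, ← mul_assoc, show ψ y₀ * c * ψ m' = P from by
          rw [hPdef, h1, map_mul, map_mul, hcdef]]
      have hy₁ : ψ y₁ = ψ m' * T * P := by rw [hm2, h2, map_mul, map_mul]
      refine hL.2 ⟨ψ m' * (T * ψ y₀), ?_⟩
      rw [hy₁]
      simp only [mul_assoc]
      rw [hP, hPTP]
    · -- zone 2 : y₀ = u * m', x = m' * of a * m, y₁ = m * u : R fails
      have hT : ∀ X : WithOne S, ψ m' * (c * (ψ m * X)) = T * X := by
        intro X
        rw [← mul_assoc, ← mul_assoc, show ψ m' * c * ψ m = T from by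
          rw [hTdef, h2, map_mul, map_mul, hcdef]]
      have hy₀ : ψ y₀ = P * ψ m' := by rw [h1, map_mul]
      refine hR.2 ⟨ψ m * (P * ψ m'), ?_⟩
      rw [hy₀]
      simp only [mul_assoc]
      rw [hT, hPTP]
  · -- zone 3 : y₀ = (u * x) * m, u = m * of a * y₁ : R fails
    have hP : ∀ X : WithOne S, ψ m * (c * (ψ y₁ * X)) = P * X := by
      intro X
      rw [← mul_assoc, ← mul_assoc, show ψ m * c * ψ y₁ = P from by
        rw [hPdef, hm2, map_mul, map_mul, hcdef]]
    have hy₀ : ψ y₀ = P * (T * ψ m) := by rw [hm1, map_mul, map_mul, mul_assoc]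
    refine hR.2 ⟨ψ y₁ * (T * ψ m), ?_⟩
    rw [hy₀]
    simp only [mul_assoc]
    rw [hP, hPTP]

theorem killed_no_good {w x₀ x₁ : FreeMonoid A} {a : A} (hK : Killed ψ w) :
    ¬ GoodFactOf ψ w x₀ a x₁ := by
  rintro ⟨heq, hR, hL⟩
  refine hK 1 1 x₀ a x₁ heq ?_ ?_
  · simpa [map_mul] using hR
  · simpa [map_mul] using hL

theorem ptrel_refl (u : FreeMonoid A) : PTRel ψ u u :=
  ⟨rfl, fun x₀ a x₁ h => ⟨x₀, x₁, h, rfl, rfl⟩, fun x₀ a x₁ h => ⟨x₀, x₁, h, rfl, rfl⟩⟩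

theorem ptrel_symm {u v : FreeMonoid A} (h : PTRel ψ u v) : PTRel ψ v u := by
  obtain ⟨h1, h2, h3⟩ := h
  refine ⟨h1.symm, ?_, ?_⟩
  · intro y₀ a y₁ hg
    obtain ⟨x₀, x₁, hx, e0, e1⟩ := h3 y₀ a y₁ hg
    exact ⟨x₀, x₁, hx, e0.symm, e1.symm⟩
  · intro x₀ a x₁ hg
    obtain ⟨y₀, y₁, hy, e0, e1⟩ := h2 x₀ a x₁ hg
    exact ⟨y₀, y₁, hy, e0.symm, e1.symm⟩

theorem ptrel_trans {u v w : FreeMonoid A} (h : PTRel ψ u v) (h' : PTRel ψ v w) :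
    PTRel ψ u w := by
  obtain ⟨h1, h2, h3⟩ := h
  obtain ⟨h1', h2', h3'⟩ := h'
  refine ⟨h1.trans h1', ?_, ?_⟩
  · intro x₀ a x₁ hg
    obtain ⟨y₀, y₁, hy, e0, e1⟩ := h2 x₀ a x₁ hg
    obtain ⟨z₀, z₁, hz, f0, f1⟩ := h2' y₀ a y₁ hy
    exact ⟨z₀, z₁, hz, e0.trans f0, e1.trans f1⟩
  · intro z₀ a z₁ hg
    obtain ⟨y₀, y₁, hy, e0, e1⟩ := h3' z₀ a z₁ hg
    obtain ⟨x₀, x₁, hx, f0, f1⟩ := h3 y₀ a y₁ hy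
    exact ⟨x₀, x₁, hx, f0.trans e0, f1.trans e1⟩

theorem good_transfer_left {u v : FreeMonoid A} (z : FreeMonoid A) (hval : ψ u = ψ v)
    (hf : ∀ (x₀ : FreeMonoid A) (a : A) (x₁ : FreeMonoid A), GoodFactOf ψ u x₀ a x₁ →
      ∃ y₀ y₁ : FreeMonoid A, GoodFactOf ψ v y₀ a y₁ ∧ ψ x₀ = ψ y₀ ∧ ψ x₁ = ψ y₁) :
    ∀ (x₀ : FreeMonoid A) (a : A) (x₁ : FreeMonoid A), GoodFactOf ψ (z * u) x₀ a x₁ →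
      ∃ y₀ y₁ : FreeMonoid A, GoodFactOf ψ (z * v) y₀ a y₁ ∧ ψ x₀ = ψ y₀ ∧ ψ x₁ = ψ y₁ := by
  rintro x₀ a x₁ ⟨heq, hR, hL⟩
  rcases split_fact heq with ⟨m, hm1, hm2⟩ | ⟨m, hm1, hm2⟩
  · -- letter inside z
    have e1 : ψ x₁ = ψ (m * v) := by rw [hm2, map_mul, map_mul, hval]
    have e2 : ψ (FreeMonoid.of a * x₁) = ψ (FreeMonoid.of a * (m * v)) := by
      rw [map_mul, map_mul, e1]
    refine ⟨x₀, m * v, ⟨?_, hR, ?_⟩, rfl, e1⟩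
    · rw [hm1, mul_assoc]
    · rw [← e1, ← e2]; exact hL
  · -- letter inside u
    have hRin : RLt (ψ (m * FreeMonoid.of a)) (ψ m) := by
      constructor
      · exact ⟨ψ (FreeMonoid.of a), by rw [map_mul]⟩
      · rintro ⟨w, hw⟩
        refine hR.2 ⟨w, ?_⟩
        rw [hm1, map_mul, hw, map_mul, map_mul, map_mul]
        simp only [mul_assoc]
    have hGin : GoodFactOf ψ u m a x₁ := ⟨hm2, hRin, hL⟩
    obtain ⟨n₀, n₁, ⟨hneq, hnR, hnL⟩, he0, he1⟩ := hf m a x₁ hGin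
    have e0 : ψ x₀ = ψ (z * n₀) := by rw [hm1, map_mul, map_mul, he0]
    have e0' : ψ (x₀ * FreeMonoid.of a) = ψ (z * n₀ * FreeMonoid.of a) := by
      rw [map_mul, map_mul, e0]
    refine ⟨z * n₀, n₁, ⟨?_, ?_, hnL⟩, e0, he1⟩
    · rw [hneq]; simp only [mul_assoc]
    · rw [← e0, ← e0']; exact hR

theorem good_transfer_right {u v : FreeMonoid A} (z : FreeMonoid A) (hval : ψ u = ψ v)
    (hf : ∀ (x₀ : FreeMonoid A) (a : A) (x₁ : FreeMonoid A), GoodFactOf ψ u x₀ a x₁ →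
      ∃ y₀ y₁ : FreeMonoid A, GoodFactOf ψ v y₀ a y₁ ∧ ψ x₀ = ψ y₀ ∧ ψ x₁ = ψ y₁) :
    ∀ (x₀ : FreeMonoid A) (a : A) (x₁ : FreeMonoid A), GoodFactOf ψ (u * z) x₀ a x₁ →
      ∃ y₀ y₁ : FreeMonoid A, GoodFactOf ψ (v * z) y₀ a y₁ ∧ ψ x₀ = ψ y₀ ∧ ψ x₁ = ψ y₁ := by
  rintro x₀ a x₁ ⟨heq, hR, hL⟩
  rcases split_fact heq with ⟨m, hm1, hm2⟩ | ⟨m, hm1, hm2⟩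
  · -- letter inside u
    have hLin : LLt (ψ (FreeMonoid.of a * m)) (ψ m) := by
      constructor
      · exact ⟨ψ (FreeMonoid.of a), by rw [map_mul]⟩
      · rintro ⟨w, hw⟩
        refine hL.2 ⟨w, ?_⟩
        rw [hm2, map_mul, hw, map_mul, map_mul, map_mul]
        simp only [mul_assoc]
    have hGin : GoodFactOf ψ u x₀ a m := ⟨hm1, hR, hLin⟩
    obtain ⟨n₀, n₁, ⟨hneq, hnR, hnL⟩, he0, he1⟩ := hf x₀ a m hGin
    have e1 : ψ x₁ = ψ (n₁ * z) := by rw [hm2, map_mul, map_mul, he1]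
    have e1' : ψ (FreeMonoid.of a * x₁) = ψ (FreeMonoid.of a * (n₁ * z)) := by
      rw [map_mul, map_mul, e1]
    refine ⟨n₀, n₁ * z, ⟨?_, hnR, ?_⟩, he0, e1⟩
    · rw [hneq]; simp only [mul_assoc]
    · rw [← e1, ← e1']; exact hL
  · -- letter inside z
    have e0 : ψ x₀ = ψ (v * m) := by rw [hm1, map_mul, map_mul, hval]
    have e0' : ψ (x₀ * FreeMonoid.of a) = ψ (v * m * FreeMonoid.of a) := by
      rw [map_mul, map_mul, e0]
    refine ⟨v * m, x₁, ⟨?_, ?_, hL⟩, e0, rfl⟩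
    · rw [hm2]; simp only [mul_assoc]
    · rw [← e0, ← e0']; exact hR

theorem ptrel_mul_left {u v : FreeMonoid A} (z : FreeMonoid A) (h : PTRel ψ u v) :
    PTRel ψ (z * u) (z * v) := by
  refine ⟨by rw [map_mul, map_mul, h.1], good_transfer_left z h.1 h.2.1, ?_⟩
  intro y₀ a y₁ hg
  obtain ⟨x₀, x₁, hx, e0, e1⟩ :=
    good_transfer_left z h.1.symm (ptrel_symm h).2.1 y₀ a y₁ hg
  exact ⟨x₀, x₁, hx, e0.symm, e1.symm⟩

theorem ptrel_mul_right {u v : FreeMonoid A} (z : FreeMonoid A) (h : PTRel ψ u v) :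
    PTRel ψ (u * z) (v * z) := by
  refine ⟨by rw [map_mul, map_mul, h.1], good_transfer_right z h.1 h.2.1, ?_⟩
  intro y₀ a y₁ hg
  obtain ⟨x₀, x₁, hx, e0, e1⟩ :=
    good_transfer_right z h.1.symm (ptrel_symm h).2.1 y₀ a y₁ hg
  exact ⟨x₀, x₁, hx, e0.symm, e1.symm⟩

theorem ptrel_mul {u u' v v' : FreeMonoid A} (h : PTRel ψ u u') (h' : PTRel ψ v v') :
    PTRel ψ (u * v) (u' * v') :=
  ptrel_trans (ptrel_mul_left u h') (ptrel_mul_right v' h)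

theorem multireg_no_good {u : FreeMonoid A} (hu : MultiregularWord ψ u) :
    ∀ (x₀ : FreeMonoid A) (a : A) (x₁ : FreeMonoid A), ¬ GoodFactOf ψ u x₀ a x₁ := by
  obtain ⟨l, -, hreg, hrel⟩ := hu
  have key : ∀ l : List (FreeMonoid A), (∀ w ∈ l, RegularWord ψ w) →
      ∃ W, PTRel ψ l.prod W ∧ Killed ψ W := by
    intro l
    induction l with
    | nil => exact fun _ => ⟨1, ptrel_refl 1, killed_one⟩
    | cons w l ih =>
      intro hl
      obtain ⟨W, hW, hWk⟩ := ih fun x hx => hl x (List.mem_cons_of_mem _ hx)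
      obtain ⟨-, x, -, hx⟩ := hl w List.mem_cons_self
      have hval : ψ w * ψ x * ψ w = ψ w := by
        have := hx.1
        simpa [map_mul] using this
      refine ⟨(w * x * w) * W, ?_, killed_mul (killed_sandwich hval) hWk⟩
      rw [List.prod_cons]
      exact ptrel_mul (ptrel_symm hx) hW
  obtain ⟨W, hW, hWk⟩ := key l hreg
  intro x₀ a x₁ hg
  obtain ⟨y₀, y₁, hgW, -, -⟩ := (ptrel_trans hrel hW).2.1 x₀ a x₁ hg
  exact killed_no_good hWk hgW

end PTProofAux

/-- The canonical projection `p_φ : S_φ → S` restricts to an isomorphism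
`⟨Reg(S_φ)⟩ → ⟨Reg(S)⟩`: it is injective on classes of multiregular words and
every element of `⟨Reg(S)⟩` is the image of a multiregular word. -/
theorem PT_expansion_regular_iso {A S : Type*} [Semigroup S] [Finite S]
    (ψ : FreeMonoid A →* WithOne S)
    (hne : ∀ w : FreeMonoid A, w ≠ 1 → ψ w ≠ 1)
    (hsurj : ∀ s : S, ∃ w : FreeMonoid A, w ≠ 1 ∧ ψ w = ↑s) :
    (∀ u v : FreeMonoid A, MultiregularWord ψ u → MultiregularWord ψ v →
        ψ u = ψ v → PTRel ψ u v) ∧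
    (∀ s ∈ Subsemigroup.closure {s : S | ∃ x, s = s * x * s},
        ∃ u : FreeMonoid A, MultiregularWord ψ u ∧ ψ u = ↑s) := by
  constructor
  · intro u v hu hv hval
    exact ⟨hval,
      fun x₀ a x₁ hg => absurd hg (multireg_no_good hu x₀ a x₁),
      fun y₀ a y₁ hg => absurd hg (multireg_no_good hv y₀ a y₁)⟩
  · intro s hs
    induction hs using Subsemigroup.closure_induction with
    | mem s hs =>
      obtain ⟨t, hst⟩ := hs
      obtain ⟨a, ha1, ha2⟩ := hsurj s
      obtain ⟨b, hb1, hb2⟩ := hsurj t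
      have hP : ψ a * ψ b * ψ a = ψ a := by
        rw [ha2, hb2, ← WithOne.coe_mul, ← WithOne.coe_mul, ← hst]
      have hvalu : ψ (a * b * a * b * a) = ↑s := by
        rw [map_mul, map_mul, map_mul, map_mul, hP, hP, ha2]
      have hK : Killed ψ (a * b * a * b * a) := by
        have e : (a * b * a * b * a : FreeMonoid A) = a * (b * a * b) * a := by
          simp [mul_assoc]
        rw [e]
        apply killed_sandwich
        rw [map_mul, map_mul]
        calc ψ a * (ψ b * ψ a * ψ b) * ψ a
            = ψ a * ψ b * ψ a * ψ b * ψ a := by simp [mul_assoc]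
          _ = ψ a := by rw [hP, hP]
      have hK2 : Killed ψ ((a * b * a * b * a) * b * (a * b * a * b * a)) := by
        have e : ((a * b * a * b * a) * b * (a * b * a * b * a) : FreeMonoid A)
            = a * (b * a * b * a * b * a * b * a * b) * a := by
          simp [mul_assoc]
        rw [e]
        apply killed_sandwich
        simp only [map_mul]
        calc ψ a * (ψ b * ψ a * ψ b * ψ a * ψ b * ψ a * ψ b * ψ a * ψ b) * ψ a
            = ψ a * ψ b * ψ a * ψ b * ψ a * ψ b * ψ a * ψ b * ψ a * ψ b * ψ a := by
              simp [mul_assoc]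
          _ = ψ a := by rw [hP, hP, hP, hP, hP]
      have hreg : RegularWord ψ (a * b * a * b * a) := by
        refine ⟨?_, b, hb1, ?_, ?_, ?_⟩
        · intro h
          rw [h, map_one] at hvalu
          exact WithOne.coe_ne_one hvalu.symm
        · rw [map_mul, map_mul, hvalu, hb2, ← WithOne.coe_mul, ← WithOne.coe_mul, ← hst]
        · intro x₀ c x₁ hg
          exact absurd hg (killed_no_good hK2)
        · intro y₀ c y₁ hg
          exact absurd hg (killed_no_good hK)
      refine ⟨a * b * a * b * a, ⟨[a * b * a * b * a], by simp, by simpa using hreg, ?_⟩,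
        hvalu⟩
      rw [List.prod_singleton]
      exact ptrel_refl _
    | mul s₁ s₂ hs₁ hs₂ ih₁ ih₂ =>
      obtain ⟨u₁, ⟨l₁, hl₁, hr₁, hp₁⟩, hv₁⟩ := ih₁
      obtain ⟨u₂, ⟨l₂, hl₂, hr₂, hp₂⟩, hv₂⟩ := ih₂
      refine ⟨u₁ * u₂, ⟨l₁ ++ l₂, ?_, ?_, ?_⟩, ?_⟩
      · intro h
        exact hl₁ (List.append_eq_nil_iff.mp h).1
      · intro w hw
        rcases List.mem_append.mp hw with hw | hw
        · exact hr₁ w hw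
        · exact hr₂ w hw
      · rw [List.prod_append]
        exact ptrel_mul hp₁ hp₂
      · rw [map_mul, hv₁, hv₂, WithOne.coe_mul]
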